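/- Let G be a connected graph and k ≥ 2 an integer. There exist k matchings in G whose union covers every vertex of G if and only if |S| ≤ k·|N(S)| for every stable set S of G. -/

import Mathlib

/-- `M` is a matching of `G`: a set of edges of `G` that are pairwise vertex-disjoint. -/
def IsMatching {V : Type*} (G : SimpleGraph V) (M : Finset (Sym2 V)) : Prop :=
  ↑M ⊆ G.edgeSet ∧ (M : Set (Sym2 V)).Pairwise fun e f => ∀ v : V, ¬(v ∈ e ∧ v ∈ f)

/-- A vertex `v` is covered by an edge set `F` if some edge of `F` is incident to it. -/
def Covers {V : Type*} (F : Finset (Sym2 V)) (v : V) : Prop := ∃ e ∈ F, v ∈ e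

instance {V : Type*} [DecidableEq V] (F : Finset (Sym2 V)) (v : V) : Decidable (Covers F v) :=
  inferInstanceAs (Decidable (∃ e ∈ F, v ∈ e))

/-- A stable (independent) set of vertices. -/
def IsStable {V : Type*} (G : SimpleGraph V) (S : Finset V) : Prop :=
  ∀ u ∈ S, ∀ v ∈ S, ¬ G.Adj u v

/-- The external neighborhood `N(S)`. -/
def nbr {V : Type*} [Fintype V] [DecidableEq V] (G : SimpleGraph V) [DecidableRel G.Adj]
    (S : Finset V) : Finset V :=
  Finset.univ.filter fun w => w ∉ S ∧ ∃ u ∈ S, G.Adj u w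

/-- degree of a vertex in an edge set -/
def degF {V : Type*} [DecidableEq V] (F : Finset (Sym2 V)) (v : V) : ℕ :=
  (F.filter fun e => v ∈ e).card



set_option linter.unusedSectionVars false
namespace MC
open Finset

variable {V : Type*} [Fintype V] [DecidableEq V]

def coveredSet (F : Finset (Sym2 V)) : Finset V := univ.filter (Covers F)

lemma mem_coveredSet {F : Finset (Sym2 V)} {v : V} : v ∈ coveredSet F ↔ ∃ e ∈ F, v ∈ e := by
  simp [coveredSet, Covers]

lemma degF_pos_iff {F : Finset (Sym2 V)} {v : V} : 0 < degF F v ↔ v ∈ coveredSet F := by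
  simp [degF, card_pos, Finset.Nonempty, mem_coveredSet, mem_filter]

lemma not_covered_degF {F : Finset (Sym2 V)} {v : V} (h : v ∉ coveredSet F) : degF F v = 0 := by
  by_contra hne
  exact h (degF_pos_iff.mp (Nat.pos_of_ne_zero hne))

lemma covered_of_mem {F : Finset (Sym2 V)} {e : Sym2 V} {v : V} (he : e ∈ F) (hv : v ∈ e) :
    v ∈ coveredSet F := mem_coveredSet.mpr ⟨e, he, hv⟩

lemma degF_insert {F : Finset (Sym2 V)} {e : Sym2 V} (he : e ∉ F) (v : V) :
    degF (insert e F) v = degF F v + (if v ∈ e then 1 else 0) := by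
  unfold degF
  rw [filter_insert]
  split
  · rw [card_insert_of_notMem (by simp only [mem_filter]; tauto)]
  · simp [*]

lemma degF_erase {F : Finset (Sym2 V)} {e : Sym2 V} (he : e ∈ F) (v : V) :
    degF (F.erase e) v = degF F v - (if v ∈ e then 1 else 0) := by
  unfold degF
  rw [filter_erase]
  split
  · rw [card_erase_of_mem (by simp only [mem_filter]; tauto)]
  · rw [erase_eq_of_notMem (by simp only [mem_filter]; tauto)]
    simp

lemma degF_mono {F F' : Finset (Sym2 V)} (h : F ⊆ F') (v : V) : degF F v ≤ degF F' v :=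
  card_le_card (filter_subset_filter _ h)

end MC

namespace MC
open Finset

variable {V : Type*}

inductive Chain (G : SimpleGraph V) (F : Finset (Sym2 V)) (U : Finset V) : V → List (V × V) → V → Prop
  | nil {u c : V} (hu : u ∈ U) (h : G.Adj u c) : Chain G F U u [] c
  | cons {u c x z : V} {L : List (V × V)} (h : Chain G F U u L c) (hF : s(c, x) ∈ F)
      (hA : G.Adj x z) : Chain G F U u ((x, z) :: L) z

variable {G : SimpleGraph V} {F : Finset (Sym2 V)} {U : Finset V}

lemma chain_start_mem {u L c} (h : Chain G F U u L c) : u ∈ U := by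
  induction h with
  | nil hu _ => exact hu
  | cons _ _ _ ih => exact ih

lemma chain_suffix {A B : List (V × V)} {u c} (h : Chain G F U u (A ++ B) c) :
    ∃ c', Chain G F U u B c' := by
  induction A generalizing c with
  | nil => exact ⟨c, h⟩
  | cons p A ih =>
    cases h with
    | cons h hF hA => exact ih h

lemma chain_norm {u L c} (h : Chain G F U u L c) :
    ∃ u' L', Chain G F U u' L' c ∧ (u' :: L'.map Prod.fst).Nodup := by
  induction h with
  | nil hu hadj => exact ⟨_, [], Chain.nil hu hadj, by simp⟩
  | cons h hF hA ih =>
    rename_i c x z L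
    obtain ⟨u', L', h', hnd⟩ := ih
    by_cases hxu : x = u'
    · exact ⟨u', [], Chain.nil (chain_start_mem h') (hxu ▸ hA), by simp⟩
    by_cases hxL : x ∈ L'.map Prod.fst
    · obtain ⟨p, hp, hpx⟩ := List.mem_map.mp hxL
      obtain ⟨px, pz⟩ := p
      simp only at hpx
      subst hpx
      obtain ⟨A, B, rfl⟩ := List.append_of_mem hp
      obtain ⟨c₂, hc₂⟩ := chain_suffix h'
      cases hc₂ with
      | cons hB hFx hAx =>
        rename_i c₃
        refine ⟨u', (px, z) :: B, Chain.cons hB hFx hA, ?_⟩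
        have h2 : List.Sublist (u' :: ((px, z) :: B).map Prod.fst)
            (u' :: (A ++ (px, pz) :: B).map Prod.fst) := by
          simp only [List.map_cons, List.map_append]
          exact List.cons_sublist_cons.mpr (List.sublist_append_right _ _)
        exact hnd.sublist h2
    · refine ⟨u', (x, z) :: L', Chain.cons h' hF hA, ?_⟩
      simp only [List.map_cons, List.nodup_cons, List.mem_cons] at hnd ⊢
      tauto

end MC

namespace MC
open Finset

variable {V : Type*} [Fintype V] [DecidableEq V] {G : SimpleGraph V} [DecidableRel G.Adj]
variable {F U : Finset (Sym2 V)} -- dummy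

section Main

variable {k : ℕ} {F : Finset (Sym2 V)} {U : Finset V}

def InvOn (G : SimpleGraph V) [Fintype V] [DecidableEq V] [DecidableRel G.Adj] (F : Finset (Sym2 V)) (U : Finset V)
    (c : V) (X : Finset V) : Prop :=
  ∃ (F' : Finset (Sym2 V)) (x u₀ : V),
    u₀ ∈ U ∧ G.Adj x c ∧ x ∈ X ∧ F' ⊆ G.edgeFinset ∧
    (∀ v, degF F' v ≤ max (degF F v) 1) ∧
    degF F' x = 0 ∧
    (∀ v ∈ X, degF F v ≤ 1) ∧
    (∀ e : Sym2 V, ¬(e ∈ F ↔ e ∈ F') → ∃ v ∈ X, v ∈ e) ∧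
    (∀ v : V, v ∈ coveredSet F ∨ v = u₀ → v = x ∨ v ∈ coveredSet F')

lemma improve_absurd
    (hMAX : ∀ F' : Finset (Sym2 V), F' ⊆ G.edgeFinset → (∀ v, degF F' v ≤ k) →
      (coveredSet F').card ≤ (coveredSet F).card)
    {F'' : Finset (Sym2 V)} (h1 : F'' ⊆ G.edgeFinset) (h2 : ∀ v, degF F'' v ≤ k)
    {u₀ : V} (h3 : coveredSet F ⊆ coveredSet F'') (h4 : u₀ ∈ coveredSet F'')
    (h5 : u₀ ∉ coveredSet F) : False := by
  have : (coveredSet F).card < (coveredSet F'').card :=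
    card_lt_card ⟨h3, fun hsub => h5 (hsub h4)⟩
  exact absurd (hMAX F'' h1 h2) (by omega)

lemma mem_s_left (a b : V) : a ∈ s(a, b) := by simp
lemma mem_s_right (a b : V) : b ∈ s(a, b) := by simp

lemma degF_pos_of_mem {F : Finset (Sym2 V)} {e : Sym2 V} {v : V} (he : e ∈ F) (hv : v ∈ e) :
    1 ≤ degF F v := by
  apply card_pos.mpr
  exact ⟨e, mem_filter.mpr ⟨he, hv⟩⟩

lemma inv_deg (hk : 2 ≤ k)
    (hdeg : ∀ v, degF F v ≤ k)
    (hMAX : ∀ F' : Finset (Sym2 V), F' ⊆ G.edgeFinset → (∀ v, degF F' v ≤ k) →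
      (coveredSet F').card ≤ (coveredSet F).card)
    (hU : ∀ u ∈ U, u ∉ coveredSet F)
    {c : V} {X : Finset V} (h : InvOn G F U c X) : degF F c = k := by
  obtain ⟨F', x, u₀, hu₀, hxc, -, hF'E, hbnd, hx0, -, -, hcov⟩ := h
  refine le_antisymm (hdeg c) ?_
  by_contra hlt
  push_neg at hlt
  have hxc' : x ≠ c := hxc.ne
  have heF' : s(x, c) ∉ F' := by
    intro hmem
    have := degF_pos_of_mem hmem (mem_s_left x c)
    omega
  set F'' := insert s(x, c) F' with hF''
  have hsubE : F'' ⊆ G.edgeFinset := by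
    refine insert_subset ?_ hF'E
    rw [SimpleGraph.mem_edgeFinset, SimpleGraph.mem_edgeSet]
    exact hxc
  have hdeg'' : ∀ v, degF F'' v ≤ k := by
    intro v
    rw [hF'', degF_insert heF']
    by_cases hv : v ∈ s(x, c)
    · rw [if_pos hv]
      rcases Sym2.mem_iff.mp hv with rfl | rfl
      · omega
      · have := hbnd v
        omega
    · rw [if_neg hv]
      have := hbnd v
      have := hdeg v
      omega
  have hxcov : x ∈ coveredSet F'' := covered_of_mem (mem_insert_self _ _) (mem_s_left x c)
  have hmono : coveredSet F' ⊆ coveredSet F'' := by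
    intro v hv
    rw [mem_coveredSet] at hv ⊢
    obtain ⟨e, he, hve⟩ := hv
    exact ⟨e, mem_insert_of_mem he, hve⟩
  have hsub : coveredSet F ⊆ coveredSet F'' := by
    intro v hv
    rcases hcov v (Or.inl hv) with rfl | hv'
    · exact hxcov
    · exact hmono hv'
  have hu₀cov : u₀ ∈ coveredSet F'' := by
    rcases hcov u₀ (Or.inr rfl) with rfl | hv'
    · exact hxcov
    · exact hmono hv'
  exact improve_absurd hMAX hsubE hdeg'' hsub hu₀cov (hU u₀ hu₀)

lemma star_lemma (hdeg : ∀ v, degF F v ≤ k) (hFE : F ⊆ G.edgeFinset)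
    (hMIN : ∀ F' : Finset (Sym2 V), F' ⊆ G.edgeFinset → (∀ v, degF F' v ≤ k) →
      (coveredSet F').card = (coveredSet F).card → F.card ≤ F'.card)
    {e : Sym2 V} (he : e ∈ F) : ∃ v, v ∈ e ∧ degF F v = 1 := by
  by_contra hno
  push_neg at hno
  have hdeg2 : ∀ v ∈ e, 2 ≤ degF F v := by
    intro v hv
    have h1 := degF_pos_of_mem he hv
    have h2 := hno v hv
    omega
  have hcovEq : coveredSet (F.erase e) = coveredSet F := by
    ext v
    simp only [mem_coveredSet]
    constructor
    · rintro ⟨f, hf, hvf⟩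
      exact ⟨f, mem_of_mem_erase hf, hvf⟩
    · rintro ⟨f, hf, hvf⟩
      by_cases hfe : f = e
      · subst hfe
        have h2 : 1 < (F.filter fun g => v ∈ g).card := hdeg2 v hvf
        obtain ⟨g, hg, hge⟩ := exists_mem_ne h2 f
        rw [mem_filter] at hg
        exact ⟨g, mem_erase.mpr ⟨hge, hg.1⟩, hg.2⟩
      · exact ⟨f, mem_erase.mpr ⟨hfe, hf⟩, hvf⟩
  have hcard := hMIN (F.erase e) ((erase_subset _ _).trans hFE)
    (fun v => (degF_mono (erase_subset _ _) v).trans (hdeg v)) (by rw [hcovEq])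
  rw [card_erase_of_mem he] at hcard
  have : 1 ≤ F.card := card_pos.mpr ⟨e, he⟩
  omega

lemma chain_inv (hk : 2 ≤ k) (hdeg : ∀ v, degF F v ≤ k) (hFE : F ⊆ G.edgeFinset)
    (hMAX : ∀ F' : Finset (Sym2 V), F' ⊆ G.edgeFinset → (∀ v, degF F' v ≤ k) →
      (coveredSet F').card ≤ (coveredSet F).card)
    (hMIN : ∀ F' : Finset (Sym2 V), F' ⊆ G.edgeFinset → (∀ v, degF F' v ≤ k) →
      (coveredSet F').card = (coveredSet F).card → F.card ≤ F'.card)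
    (hU : ∀ u ∈ U, u ∉ coveredSet F)
    {u : V} {L : List (V × V)} {c : V} (h : Chain G F U u L c)
    (hnd : (u :: L.map Prod.fst).Nodup) :
    InvOn G F U c (u :: L.map Prod.fst).toFinset := by
  induction h with
  | nil hu hadj =>
    refine ⟨F, u, u, hu, hadj, by simp, hFE, fun v => le_max_left _ _,
      not_covered_degF (hU u hu), ?_, fun e hne => absurd Iff.rfl hne, ?_⟩
    · intro v hv
      simp only [List.map_nil, List.toFinset_cons, List.toFinset_nil] at hv
      have : v = u := by simpa using hv
      subst this
      rw [not_covered_degF (hU v hu)]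
      omega
    · intro v hv
      rcases hv with hv | rfl
      · exact Or.inr hv
      · exact Or.inl rfl
  | @cons c x' z L h hF hA ih =>
    simp only [List.map_cons, List.nodup_cons, List.mem_cons] at hnd
    push_neg at hnd
    obtain ⟨⟨hux', huL⟩, hx'L, hndL⟩ := hnd
    have hndtail : (u :: L.map Prod.fst).Nodup := List.nodup_cons.mpr ⟨by simpa using huL, hndL⟩
    have IH := ih hndtail
    obtain ⟨F', x₀, u₀, hu₀, hx₀c, hx₀X, hF'E, hbnd, hx₀0, hXdeg, hdiff, hcov⟩ := IH
    have hdegc : degF F c = k :=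
      inv_deg hk hdeg hMAX hU ⟨F', x₀, u₀, hu₀, hx₀c, hx₀X, hF'E, hbnd, hx₀0, hXdeg, hdiff, hcov⟩
    have hcx' : G.Adj c x' := by
      have := hFE hF
      rwa [SimpleGraph.mem_edgeFinset, SimpleGraph.mem_edgeSet] at this
    have hx'deg : degF F x' = 1 := by
      obtain ⟨v, hve, hv1⟩ := star_lemma hdeg hFE hMIN hF
      rcases Sym2.mem_iff.mp hve with rfl | rfl
      · omega
      · exact hv1
    have hx'X₀ : x' ∉ (u :: L.map Prod.fst).toFinset := by
      simp only [List.toFinset_cons, mem_insert, List.mem_toFinset]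
      push_neg
      exact ⟨fun hh => hux' hh.symm, hx'L⟩
    have hcX₀ : c ∉ (u :: L.map Prod.fst).toFinset := by
      intro hc
      have := hXdeg c hc
      omega
    have hedgeF' : s(c, x') ∈ F' := by
      by_contra hne
      obtain ⟨v, hvX, hve⟩ := hdiff s(c, x') (by tauto)
      rcases Sym2.mem_iff.mp hve with rfl | rfl
      · exact hcX₀ hvX
      · exact hx'X₀ hvX
    have hx₀c' : x₀ ≠ c := hx₀c.ne
    have hx'c : x' ≠ c := hcx'.ne'
    have hx₀x' : x₀ ≠ x' := by
      intro hh
      subst hh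
      exact hx'X₀ hx₀X
    have hsne : s(x₀, c) ≠ s(c, x') := by
      intro heq
      have : x₀ ∈ s(c, x') := heq ▸ mem_s_left x₀ c
      rcases Sym2.mem_iff.mp this with hh | hh
      · exact hx₀c' hh
      · exact hx₀x' hh
    have hx₀notin : s(x₀, c) ∉ F' := by
      intro hmem
      have := degF_pos_of_mem hmem (mem_s_left x₀ c)
      omega
    have hx₀notinE : s(x₀, c) ∉ F'.erase s(c, x') := fun hh => hx₀notin (mem_of_mem_erase hh)
    have hdegF'x' : degF F' x' = 1 := by
      have h1 := degF_pos_of_mem hedgeF' (mem_s_right c x')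
      have h2 := hbnd x'
      rw [hx'deg] at h2
      omega
    have hdegF'c1 : 1 ≤ degF F' c := degF_pos_of_mem hedgeF' (mem_s_left c x')
    refine ⟨insert s(x₀, c) (F'.erase s(c, x')), x', u₀, hu₀, hA, by simp, ?_, ?_, ?_, ?_, ?_, ?_⟩
    · refine insert_subset ?_ ((erase_subset _ _).trans hF'E)
      rw [SimpleGraph.mem_edgeFinset, SimpleGraph.mem_edgeSet]
      exact hx₀c
    · intro v
      rw [degF_insert hx₀notinE, degF_erase hedgeF']
      by_cases hv1 : v ∈ s(x₀, c)
      · rcases Sym2.mem_iff.mp hv1 with rfl | rfl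
        · have hnot : v ∉ s(c, x') := by
            rw [Sym2.mem_iff]
            push_neg
            exact ⟨hx₀c', hx₀x'⟩
          rw [if_pos hv1, if_neg hnot, hx₀0]
          simpa using le_max_right (degF F v) 1
        · rw [if_pos hv1, if_pos (mem_s_left v x')]
          have heq : degF F' v - 1 + 1 = degF F' v := by omega
          rw [heq]
          exact hbnd v
      · rw [if_neg hv1]
        by_cases hv2 : v ∈ s(c, x')
        · rw [if_pos hv2]
          have heq : degF F' v - 1 + 0 ≤ degF F' v := by omega
          exact heq.trans (hbnd v)
        · rw [if_neg hv2]
          simpa using hbnd v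
    · rw [degF_insert hx₀notinE, degF_erase hedgeF', hdegF'x',
        if_pos (mem_s_right c x'), if_neg (by
          rw [Sym2.mem_iff]
          push_neg
          exact ⟨fun hh => hx₀x' hh.symm, hx'c⟩)]
    · intro v hv
      rw [List.map_cons, List.mem_toFinset, List.mem_cons, List.mem_cons] at hv
      rcases hv with rfl | rfl | hv
      · exact hXdeg v (by simp)
      · rw [hx'deg]
      · exact hXdeg v (by
          rw [List.mem_toFinset, List.mem_cons]
          exact Or.inr hv)
    · intro e hne
      by_cases h1 : e = s(x₀, c)
      · subst h1
        refine ⟨x₀, ?_, mem_s_left x₀ c⟩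
        rw [List.mem_toFinset, List.mem_cons] at hx₀X
        rw [List.map_cons, List.mem_toFinset, List.mem_cons, List.mem_cons]
        tauto
      · by_cases h2 : e = s(c, x')
        · subst h2
          refine ⟨x', ?_, mem_s_right c x'⟩
          simp
        · have hmem : e ∈ insert s(x₀, c) (F'.erase s(c, x')) ↔ e ∈ F' := by
            rw [mem_insert, mem_erase]
            constructor
            · rintro (rfl | ⟨-, hh⟩)
              · exact absurd rfl h1
              · exact hh
            · intro hh
              exact Or.inr ⟨h2, hh⟩
          rw [hmem] at hne
          obtain ⟨v, hvX, hve⟩ := hdiff e hne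
          refine ⟨v, ?_, hve⟩
          rw [List.mem_toFinset, List.mem_cons] at hvX
          rw [List.map_cons, List.mem_toFinset, List.mem_cons, List.mem_cons]
          tauto
    · intro v hv
      by_cases hvx' : v = x'
      · exact Or.inl hvx'
      refine Or.inr ?_
      have hxcov : x₀ ∈ coveredSet (insert s(x₀, c) (F'.erase s(c, x'))) :=
        covered_of_mem (mem_insert_self _ _) (mem_s_left x₀ c)
      have hccov : c ∈ coveredSet (insert s(x₀, c) (F'.erase s(c, x'))) :=
        covered_of_mem (mem_insert_self _ _) (mem_s_right x₀ c)
      rcases hcov v hv with rfl | hv'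
      · exact hxcov
      · rw [mem_coveredSet] at hv'
        obtain ⟨e, he, hve⟩ := hv'
        by_cases hee : e = s(c, x')
        · subst hee
          rcases Sym2.mem_iff.mp hve with rfl | rfl
          · exact hccov
          · exact absurd rfl hvx'
        · exact covered_of_mem (mem_insert_of_mem (mem_erase.mpr ⟨hee, he⟩)) hve

lemma chain_deg (hk : 2 ≤ k) (hdeg : ∀ v, degF F v ≤ k) (hFE : F ⊆ G.edgeFinset)
    (hMAX : ∀ F' : Finset (Sym2 V), F' ⊆ G.edgeFinset → (∀ v, degF F' v ≤ k) →
      (coveredSet F').card ≤ (coveredSet F).card)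
    (hMIN : ∀ F' : Finset (Sym2 V), F' ⊆ G.edgeFinset → (∀ v, degF F' v ≤ k) →
      (coveredSet F').card = (coveredSet F).card → F.card ≤ F'.card)
    (hU : ∀ u ∈ U, u ∉ coveredSet F)
    {u : V} {L : List (V × V)} {c : V} (h : Chain G F U u L c) : degF F c = k := by
  obtain ⟨u', L', h', hnd⟩ := chain_norm h
  exact inv_deg hk hdeg hMAX hU (chain_inv hk hdeg hFE hMAX hMIN hU h' hnd)

lemma deg_count (c : V) : (univ.filter fun x => s(c, x) ∈ F).card = degF F c := by
  unfold degF
  apply card_bij (fun x _ => s(c, x))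
  · intro x hx
    rw [mem_filter] at hx ⊢
    exact ⟨hx.2, mem_s_left c x⟩
  · intro x hx y hy hxy
    exact Sym2.congr_right.mp hxy
  · intro e he
    rw [mem_filter] at he
    obtain ⟨heF, hce⟩ := he
    induction e with
    | _ a b =>
      rcases Sym2.mem_iff.mp hce with rfl | rfl
      · exact ⟨b, mem_filter.mpr ⟨mem_univ _, heF⟩, rfl⟩
      · exact ⟨a, mem_filter.mpr ⟨mem_univ _, by rwa [Sym2.eq_swap]⟩, Sym2.eq_swap⟩

lemma covered_univ (hk : 2 ≤ k) (hdeg : ∀ v, degF F v ≤ k) (hFE : F ⊆ G.edgeFinset)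
    (hMAX : ∀ F' : Finset (Sym2 V), F' ⊆ G.edgeFinset → (∀ v, degF F' v ≤ k) →
      (coveredSet F').card ≤ (coveredSet F).card)
    (hMIN : ∀ F' : Finset (Sym2 V), F' ⊆ G.edgeFinset → (∀ v, degF F' v ≤ k) →
      (coveredSet F').card = (coveredSet F).card → F.card ≤ F'.card)
    (hcond : ∀ S : Finset V, IsStable G S → S.card ≤ k * (nbr G S).card) :
    coveredSet F = univ := by
  classical
  by_contra hne
  set U := univ \ coveredSet F with hUdef
  have hUne : U.Nonempty := by
    rw [hUdef, sdiff_nonempty]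
    intro hsub
    exact hne (le_antisymm (subset_univ _) hsub)
  have hU : ∀ u ∈ U, u ∉ coveredSet F := by
    intro u hu
    rw [hUdef, mem_sdiff] at hu
    exact hu.2
  set RC : Finset V := univ.filter (fun c => ∃ u L, Chain G F U u L c) with hRCdef
  set X : Finset V := univ.filter (fun x => ∃ c, (∃ u L, Chain G F U u L c) ∧ s(c, x) ∈ F)
    with hXdef
  have hRCdeg : ∀ c ∈ RC, degF F c = k := by
    intro c hc
    rw [hRCdef, mem_filter] at hc
    obtain ⟨-, u, L, hch⟩ := hc
    exact chain_deg hk hdeg hFE hMAX hMIN hU hch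
  have hXdeg1 : ∀ x ∈ X, degF F x = 1 := by
    intro x hx
    rw [hXdef, mem_filter] at hx
    obtain ⟨-, c, ⟨u, L, hch⟩, hcF⟩ := hx
    obtain ⟨v, hve, hv1⟩ := star_lemma hdeg hFE hMIN hcF
    have hcdeg : degF F c = k := chain_deg hk hdeg hFE hMAX hMIN hU hch
    rcases Sym2.mem_iff.mp hve with rfl | rfl
    · omega
    · exact hv1
  have hUdeg : ∀ u ∈ U, degF F u = 0 := fun u hu => not_covered_degF (hU u hu)
  have hUX : Disjoint U X := by
    rw [disjoint_left]
    intro a haU haX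
    have h0 := hUdeg a haU
    have h1 := hXdeg1 a haX
    omega
  have hchainS : ∀ a ∈ U ∪ X, ∀ b, G.Adj a b → degF F b = k := by
    intro a ha b hadj
    rw [mem_union] at ha
    rcases ha with haU | haX
    · exact chain_deg hk hdeg hFE hMAX hMIN hU (Chain.nil haU hadj)
    · rw [hXdef, mem_filter] at haX
      obtain ⟨-, c, ⟨u, L, hch⟩, hcF⟩ := haX
      exact chain_deg hk hdeg hFE hMAX hMIN hU (Chain.cons hch hcF hadj)
  have hstable : IsStable G (U ∪ X) := by
    intro a ha b hb hadj
    have hbk := hchainS a ha b hadj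
    have : degF F b ≤ 1 := by
      rw [mem_union] at hb
      rcases hb with hbU | hbX
      · rw [hUdeg b hbU]; omega
      · rw [hXdeg1 b hbX]
    omega
  have hnbr : nbr G (U ∪ X) ⊆ RC := by
    intro w hw
    rw [nbr, mem_filter] at hw
    obtain ⟨-, -, a, haS, hadj⟩ := hw
    rw [hRCdef, mem_filter]
    refine ⟨mem_univ _, ?_⟩
    rw [mem_union] at haS
    rcases haS with haU | haX
    · exact ⟨a, [], Chain.nil haU hadj⟩
    · rw [hXdef, mem_filter] at haX
      obtain ⟨-, c, ⟨u, L, hch⟩, hcF⟩ := haX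
      exact ⟨u, (a, w) :: L, Chain.cons hch hcF hadj⟩
  have hXcard : X.card = k * RC.card := by
    have hXeq : X = RC.biUnion (fun c => univ.filter fun x => s(c, x) ∈ F) := by
      ext x
      rw [hXdef, mem_filter, mem_biUnion]
      constructor
      · rintro ⟨-, c, hc, hcF⟩
        exact ⟨c, by rw [hRCdef, mem_filter]; exact ⟨mem_univ _, hc⟩,
          mem_filter.mpr ⟨mem_univ _, hcF⟩⟩
      · rintro ⟨c, hcRC, hx⟩
        rw [mem_filter] at hx
        rw [hRCdef, mem_filter] at hcRC
        exact ⟨mem_univ _, c, hcRC.2, hx.2⟩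
    rw [hXeq, card_biUnion, mul_comm]
    · rw [Finset.sum_congr rfl (fun c hc => by rw [deg_count c, hRCdeg c hc])]
      rw [Finset.sum_const, smul_eq_mul]
    · intro c hc c' hc' hcc'
      rw [Function.onFun_apply, disjoint_left]
      intro x hx hx'
      rw [mem_filter] at hx hx'
      have hne2 : s(c, x) ≠ s(c', x) := by
        intro heq
        rcases Sym2.eq_iff.mp heq with ⟨h1, -⟩ | ⟨h1, h2⟩
        · exact hcc' h1
        · exact hcc' (h1.trans h2)
      have : 2 ≤ degF F x := by
        show 1 < (F.filter fun e => x ∈ e).card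
        rw [Finset.one_lt_card]
        exact ⟨s(c, x), mem_filter.mpr ⟨hx.2, mem_s_right c x⟩,
          s(c', x), mem_filter.mpr ⟨hx'.2, mem_s_right c' x⟩, hne2⟩
      have hx1 : degF F x = 1 := hXdeg1 x (by
        rw [hXdef, mem_filter]
        rw [hRCdef, Finset.mem_coe, mem_filter] at hc
        exact ⟨mem_univ _, c, hc.2, hx.2⟩)
      omega
  have hScard := hcond (U ∪ X) hstable
  rw [card_union_of_disjoint hUX, hXcard] at hScard
  have hle : (nbr G (U ∪ X)).card ≤ RC.card := card_le_card hnbr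
  have hUcard : 0 < U.card := card_pos.mpr hUne
  have : k * (nbr G (U ∪ X)).card ≤ k * RC.card := Nat.mul_le_mul_left k hle
  omega

lemma exists_opt (k : ℕ) :
    ∃ F : Finset (Sym2 V), F ⊆ G.edgeFinset ∧ (∀ v, degF F v ≤ k) ∧
      (∀ F' : Finset (Sym2 V), F' ⊆ G.edgeFinset → (∀ v, degF F' v ≤ k) →
        (coveredSet F').card ≤ (coveredSet F).card) ∧
      (∀ F' : Finset (Sym2 V), F' ⊆ G.edgeFinset → (∀ v, degF F' v ≤ k) →
        (coveredSet F').card = (coveredSet F).card → F.card ≤ F'.card) := by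
  classical
  set cand := (G.edgeFinset.powerset).filter (fun F => ∀ v, degF F v ≤ k) with hcand
  have hmemcand : ∀ F : Finset (Sym2 V),
      F ∈ cand ↔ (F ⊆ G.edgeFinset ∧ ∀ v, degF F v ≤ k) := by
    intro F
    rw [hcand, mem_filter, mem_powerset]
  have hne : cand.Nonempty := ⟨∅, (hmemcand ∅).mpr ⟨empty_subset _, fun v => by
    simp [degF]⟩⟩
  obtain ⟨F₀, hF₀, hmax⟩ := Finset.exists_max_image cand (fun F => (coveredSet F).card) hne
  set cand2 := cand.filter (fun F' => (coveredSet F').card = (coveredSet F₀).card) with hcand2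
  have hne2 : cand2.Nonempty := ⟨F₀, by rw [hcand2, mem_filter]; exact ⟨hF₀, rfl⟩⟩
  obtain ⟨F, hF, hmin⟩ := Finset.exists_min_image cand2 (fun F => F.card) hne2
  rw [hcand2, mem_filter] at hF
  obtain ⟨hFc, hFcov⟩ := hF
  rw [hmemcand] at hFc
  refine ⟨F, hFc.1, hFc.2, ?_, ?_⟩
  · intro F' h1 h2
    rw [hFcov]
    exact hmax F' ((hmemcand F').mpr ⟨h1, h2⟩)
  · intro F' h1 h2 h3
    refine hmin F' ?_
    rw [hcand2, mem_filter]
    exact ⟨(hmemcand F').mpr ⟨h1, h2⟩, by rw [h3, hFcov]⟩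

lemma other_endpoint {e : Sym2 V} {v : V} (he : e ∈ G.edgeSet) (hv : v ∈ e) :
    ∃ w, G.Adj v w ∧ e = s(v, w) := by
  induction e with
  | _ a b =>
    rcases Sym2.mem_iff.mp hv with rfl | rfl
    · exact ⟨b, G.mem_edgeSet.mp he, rfl⟩
    · exact ⟨a, (G.mem_edgeSet.mp he).symm, Sym2.eq_swap⟩

lemma rank_lt {α : Type*} [DecidableEq α] {A : Finset α} {ι : α → ℕ} {e : α} (he : e ∈ A) :
    ((A.filter fun g => ι g < ι e).card) < A.card := by
  refine lt_of_le_of_lt (card_le_card (fun g hg => ?_)) (card_erase_lt_of_mem he)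
  rw [mem_filter] at hg
  exact mem_erase.mpr ⟨fun hh => by subst hh; omega, hg.1⟩

lemma rank_inj {α : Type*} [DecidableEq α] {A : Finset α} {ι : α → ℕ}
    (hι : Function.Injective ι) {e f : α} (he : e ∈ A) (hf : f ∈ A)
    (h : (A.filter fun g => ι g < ι e).card = (A.filter fun g => ι g < ι f).card) : e = f := by
  by_contra hne
  have key : ∀ {a b : α}, a ∈ A → ι a < ι b →
      (A.filter fun g => ι g < ι a).card < (A.filter fun g => ι g < ι b).card := by
    intro a b ha hab
    apply card_lt_card
    constructor
    · intro g hg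
      rw [mem_filter] at hg ⊢
      exact ⟨hg.1, hg.2.trans hab⟩
    · intro hsub
      have := hsub (mem_filter.mpr ⟨ha, hab⟩)
      rw [mem_filter] at this
      omega
  have hne' : ι e ≠ ι f := fun hh => hne (hι hh)
  rcases lt_or_gt_of_ne hne' with hlt | hlt
  · exact absurd h (Nat.ne_of_lt (key he hlt))
  · exact absurd h.symm (Nat.ne_of_lt (key hf hlt))

noncomputable def centerF (F : Finset (Sym2 V)) (e : Sym2 V) : V :=
  if 2 ≤ degF F e.out.1 then e.out.1 else e.out.2

noncomputable def AF (F : Finset (Sym2 V)) (e : Sym2 V) : Finset (Sym2 V) :=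
  F.filter (fun f => centerF F f = centerF F e)

noncomputable def iS : Sym2 V → ℕ := fun e => ((Fintype.equivFin (Sym2 V)) e : ℕ)

lemma iS_inj : Function.Injective (iS (V := V)) := fun a b hab =>
  (Fintype.equivFin (Sym2 V)).injective (Fin.ext hab)

noncomputable def colN (F : Finset (Sym2 V)) (e : Sym2 V) : ℕ :=
  ((AF F e).filter fun g => iS g < iS e).card

lemma mem_mk_out (e : Sym2 V) {v : V} (hv : v ∈ e) : v = e.out.1 ∨ v = e.out.2 := by
  have h1 : Sym2.mk e.out.1 e.out.2 = e := e.out_eq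
  have h2 : v ∈ s(e.out.1, e.out.2) := by
    rw [show s(e.out.1, e.out.2) = Sym2.mk e.out.1 e.out.2 from rfl, h1]
    exact hv
  exact Sym2.mem_iff.mp h2

lemma centerF_mem (F : Finset (Sym2 V)) (e : Sym2 V) : centerF F e ∈ e := by
  rw [centerF]
  split
  · exact Sym2.out_fst_mem e
  · exact Sym2.out_snd_mem e

lemma centerF_eq {F : Finset (Sym2 V)}
    (hstar : ∀ e ∈ F, ∃ v, v ∈ e ∧ degF F v = 1)
    {e : Sym2 V} (he : e ∈ F) {v : V} (hv : v ∈ e) (h2 : 2 ≤ degF F v) : centerF F e = v := by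
  obtain ⟨w, hwe, hw1⟩ := hstar e he
  rcases mem_mk_out e hv with hva | hvb
  · rw [centerF, if_pos (hva ▸ h2)]
    exact hva.symm
  · rcases mem_mk_out e hwe with hwa | hwb
    · by_cases hab : e.out.1 = e.out.2
      · rw [centerF]
        split
        · rw [hab]
          exact hvb.symm
        · exact hvb.symm
      · rw [centerF, if_neg (by rw [← hwa, hw1]; omega)]
        exact hvb.symm
    · rw [hvb, ← hwb] at h2
      omega
  -- missing case? hva covers v = out.1; in second branch v = out.2.

lemma colN_lt {F : Finset (Sym2 V)} {k : ℕ} (hdeg : ∀ v, degF F v ≤ k)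
    {e : Sym2 V} (he : e ∈ F) : colN F e < k := by
  have h1 : e ∈ AF F e := mem_filter.mpr ⟨he, rfl⟩
  have h2 : (AF F e).card ≤ k := by
    have hsub : AF F e ⊆ F.filter (fun f => centerF F e ∈ f) := by
      intro f hf
      rw [AF, mem_filter] at hf
      exact mem_filter.mpr ⟨hf.1, hf.2 ▸ centerF_mem F f⟩
    exact (card_le_card hsub).trans (hdeg (centerF F e))
  exact lt_of_lt_of_le (rank_lt h1) h2

lemma exists_matchings (hk : 2 ≤ k) (hFE : F ⊆ G.edgeFinset) (hdeg : ∀ v, degF F v ≤ k)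
    (hstar : ∀ e ∈ F, ∃ v, v ∈ e ∧ degF F v = 1)
    (hcovuniv : coveredSet F = univ) :
    ∃ M : Fin k → Finset (Sym2 V), (∀ i, IsMatching G (M i)) ∧ ∀ v : V, ∃ i, Covers (M i) v := by
  classical
  refine ⟨fun i => F.filter (fun e => colN F e = (i : ℕ)), ?_, ?_⟩
  · intro i
    constructor
    · intro e he
      rw [Finset.mem_coe, mem_filter] at he
      rw [← SimpleGraph.mem_edgeFinset]
      exact hFE he.1
    · intro e he f hf hne v hvef
      obtain ⟨hv1, hv2⟩ := hvef
      rw [Finset.mem_coe, mem_filter] at he hf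
      have h2v : 2 ≤ degF F v := by
        show 1 < (F.filter fun g => v ∈ g).card
        rw [Finset.one_lt_card]
        exact ⟨e, mem_filter.mpr ⟨he.1, hv1⟩, f, mem_filter.mpr ⟨hf.1, hv2⟩, hne⟩
      have hce : centerF F e = v := centerF_eq hstar he.1 hv1 h2v
      have hcf : centerF F f = v := centerF_eq hstar hf.1 hv2 h2v
      have hAef : AF F f = AF F e := by
        rw [AF, AF, hce, hcf]
      have hcol : ((AF F e).filter fun g => iS g < iS e).card
          = ((AF F e).filter fun g => iS g < iS f).card := by
        have h1 : colN F e = colN F f := by rw [he.2, hf.2]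
        rw [colN, colN, hAef] at h1
        exact h1
      have heA : e ∈ AF F e := by
        rw [AF, mem_filter]
        exact ⟨he.1, rfl⟩
      have hfA : f ∈ AF F e := by
        rw [AF, mem_filter]
        exact ⟨hf.1, hcf.trans hce.symm⟩
      exact hne (rank_inj iS_inj heA hfA hcol)
  · intro v
    have hv : v ∈ coveredSet F := hcovuniv ▸ mem_univ v
    obtain ⟨e, he, hve⟩ := mem_coveredSet.mp hv
    exact ⟨⟨colN F e, colN_lt hdeg he⟩, e, mem_filter.mpr ⟨he, rfl⟩, hve⟩

lemma forward {M : Fin k → Finset (Sym2 V)} (hM : ∀ i, IsMatching G (M i))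
    (hcov : ∀ v : V, ∃ i, Covers (M i) v) {S : Finset V} (hS : IsStable G S) :
    S.card ≤ k * (nbr G S).card := by
  classical
  have hsel : ∀ v : V, ∃ (i : Fin k) (w : V), G.Adj v w ∧ s(v, w) ∈ M i := by
    intro v
    obtain ⟨i, e, he, hve⟩ := hcov v
    obtain ⟨w, hadj, heq⟩ := other_endpoint ((hM i).1 (Finset.mem_coe.mpr he)) hve
    exact ⟨i, w, hadj, heq ▸ he⟩
  choose i w hadj hmem using hsel
  have hcard : ((univ : Finset (Fin k)) ×ˢ nbr G S).card = k * (nbr G S).card := by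
    rw [card_product, card_univ, Fintype.card_fin]
  rw [← hcard]
  apply card_le_card_of_injOn (fun v => (i v, w v))
  · intro v hv
    rw [Finset.mem_coe, mem_product]
    refine ⟨mem_univ _, ?_⟩
    rw [nbr, mem_filter]
    refine ⟨mem_univ _, fun hwS => hS v hv (w v) hwS (hadj v), v, hv, hadj v⟩
  · intro v1 hv1 v2 hv2 heq
    simp only [Prod.mk.injEq] at heq
    obtain ⟨hi, hw⟩ := heq
    by_contra hne
    have he1 : s(v1, w v1) ∈ M (i v1) := hmem v1
    have he2 : s(v2, w v1) ∈ M (i v1) := by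
      rw [hw, hi]
      exact hmem v2
    by_cases hee : s(v1, w v1) = s(v2, w v1)
    · exact hne (Sym2.congr_left.mp hee)
    · exact (hM (i v1)).2 (Finset.mem_coe.mpr he1) (Finset.mem_coe.mpr he2) hee (w v1)
        ⟨mem_s_right v1 (w v1), mem_s_right v2 (w v1)⟩

end Main
end MC

theorem stmt_2 {V : Type*} [Fintype V] [DecidableEq V] (G : SimpleGraph V) [DecidableRel G.Adj]
    (hG : G.Connected) (k : ℕ) (hk : 2 ≤ k) :
    (∃ M : Fin k → Finset (Sym2 V),
        (∀ i, IsMatching G (M i)) ∧ ∀ v : V, ∃ i, Covers (M i) v) ↔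
      ∀ S : Finset V, IsStable G S → S.card ≤ k * (nbr G S).card := by
  constructor
  · rintro ⟨M, hM, hcov⟩ S hS
    exact MC.forward hM hcov hS
  · intro hcond
    obtain ⟨F, hFE, hdeg, hMAX, hMIN⟩ := MC.exists_opt (G := G) k
    have hcovuniv := MC.covered_univ hk hdeg hFE hMAX hMIN hcond
    exact MC.exists_matchings hk hFE hdeg
      (fun e he => MC.star_lemma hdeg hFE hMIN he) hcovuniv
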